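/- For every f ∈ L^∞([1,∞)), P̄(f) = K̄(Wf), where (Wf)(x) = f(eˣ). That is, lim_{θ→1⁺} limsup_{x→∞} (1/(θx−x))∫ₓ^{θx} f(t)dt equals lim_{θ→0⁺} limsup_{x→∞} (1/θ)∫ₓ^{x+θ} f(eᵗ)dt. -/

import Mathlib

open Filter MeasureTheory Set Topology

/-- The inner limsup defining `P̄`. -/
noncomputable def innerP (f : ℝ → ℝ) (θ : ℝ) : ℝ :=
  Filter.limsup (fun x : ℝ => (∫ t in x..(θ * x), f t) / (θ * x - x)) Filter.atTop

/-- The inner limsup defining `K̄`. -/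
noncomputable def innerK (f : ℝ → ℝ) (θ : ℝ) : ℝ :=
  Filter.limsup (fun x : ℝ => (∫ t in x..(x + θ), f t) / θ) Filter.atTop


lemma aux_intInt {f : ℝ → ℝ} (hm : Measurable f) {a b C : ℝ}
    (h : ∀ t ∈ Set.uIoc a b, |f t| ≤ C) : IntervalIntegrable f volume a b := by
  apply (intervalIntegrable_const (c := C) (μ := volume)).mono_fun' hm.aestronglyMeasurable
  refine (ae_restrict_iff' measurableSet_uIoc).2 (ae_of_all _ ?_)
  intro x hx; simpa [Real.norm_eq_abs] using h x hx

lemma aux_limsup_map {α β : Type*} (u : β → ℝ) (m : α → β) (l : Filter α) :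
    limsup (fun x => u (m x)) l = limsup u (l.map m) := by
  unfold Filter.limsup
  rw [Filter.map_map]
  rfl

lemma aux_limsup_shift (F : ℝ → ℝ) (c : ℝ) :
    limsup (fun x => F (x + c)) atTop = limsup F atTop := by
  rw [aux_limsup_map F (fun x => x + c) atTop]
  congr 1
  exact (OrderIso.addRight c).map_atTop

lemma aux_limsup_add_const (v : ℝ → ℝ) {K : ℝ} (hv : ∀ᶠ x in atTop, |v x| ≤ K) (c : ℝ) :
    limsup (fun x => v x + c) atTop = limsup v atTop + c := by
  have h1 : IsBoundedUnder (· ≤ ·) atTop v :=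
    isBoundedUnder_of_eventually_le (hv.mono fun x hx => (abs_le.1 hx).2)
  have h2 : IsCoboundedUnder (· ≤ ·) atTop v :=
    (isBoundedUnder_of_eventually_ge (hv.mono fun x hx => (abs_le.1 hx).1)).isCoboundedUnder_le
  have h3 : IsBoundedUnder (· ≤ ·) atTop (fun x => v x + c) :=
    isBoundedUnder_of_eventually_le (a := K + c) (hv.mono fun x hx => by
      have := (abs_le.1 hx).2; linarith)
  have h4 : IsCoboundedUnder (· ≤ ·) atTop (fun x => v x + c) :=
    (isBoundedUnder_of_eventually_ge (a := -K + c) (hv.mono fun x hx => by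
      have := (abs_le.1 hx).1; linarith)).isCoboundedUnder_le
  exact ((OrderIso.addRight c).limsup_apply h1 h2 h3 h4).symm

lemma aux_abs_limsup_sub {u v : ℝ → ℝ} {c K : ℝ}
    (hev : ∀ᶠ x in atTop, |u x - v x| ≤ c)
    (hu : ∀ᶠ x in atTop, |u x| ≤ K) (hv : ∀ᶠ x in atTop, |v x| ≤ K) :
    |limsup u atTop - limsup v atTop| ≤ c := by
  have bu2 : IsCoboundedUnder (· ≤ ·) atTop u :=
    (isBoundedUnder_of_eventually_ge (hu.mono fun x hx => (abs_le.1 hx).1)).isCoboundedUnder_le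
  have bv2 : IsCoboundedUnder (· ≤ ·) atTop v :=
    (isBoundedUnder_of_eventually_ge (hv.mono fun x hx => (abs_le.1 hx).1)).isCoboundedUnder_le
  have vb : IsBoundedUnder (· ≤ ·) atTop (fun x => v x + c) :=
    isBoundedUnder_of_eventually_le (a := K + c) (hv.mono fun x hx => by
      have := (abs_le.1 hx).2; linarith)
  have ub : IsBoundedUnder (· ≤ ·) atTop (fun x => u x + c) :=
    isBoundedUnder_of_eventually_le (a := K + c) (hu.mono fun x hx => by
      have := (abs_le.1 hx).2; linarith)
  have h1 : limsup u atTop ≤ limsup v atTop + c := by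
    rw [← aux_limsup_add_const v hv c]
    refine limsup_le_limsup (hev.mono fun x hx => ?_) bu2 vb
    have := (abs_le.1 hx).2; show u x ≤ v x + c; linarith
  have h2 : limsup v atTop ≤ limsup u atTop + c := by
    rw [← aux_limsup_add_const u hu c]
    refine limsup_le_limsup (hev.mono fun x hx => ?_) bv2 ub
    have := (abs_le.1 hx).1; show v x ≤ u x + c; linarith
  rw [abs_le]; constructor <;> linarith

open Filter MeasureTheory Set Topology
-- assume helpers from t1 via copy
section H
variable {g : ℝ → ℝ} {C : ℝ}


lemma g_intInt (hm : Measurable g) (hgb : ∀ x ≥ (0:ℝ), |g x| ≤ C)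
    {a b : ℝ} (ha : 0 ≤ a) (hb : 0 ≤ b) : IntervalIntegrable g volume a b := by
  refine aux_intInt hm (C := C) fun t ht => hgb t ?_
  rcases ht with ⟨h1, _⟩
  exact le_of_lt (lt_of_le_of_lt (le_min ha hb) h1)

lemma g_intBound (hm : Measurable g) (hgb : ∀ x ≥ (0:ℝ), |g x| ≤ C)
    {a b : ℝ} (ha : 0 ≤ a) (hb : 0 ≤ b) :
    |∫ t in a..b, g t| ≤ C * |b - a| := by
  rw [← Real.norm_eq_abs (∫ t in a..b, g t)]
  refine intervalIntegral.norm_integral_le_of_norm_le_const fun x hx => ?_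
  rcases hx with ⟨h1, _⟩
  exact (Real.norm_eq_abs _) ▸ hgb x (le_of_lt (lt_of_le_of_lt (le_min ha hb) h1))

lemma II_bound (hm : Measurable g) (hgb : ∀ x ≥ (0:ℝ), |g x| ≤ C) {θ : ℝ} (hθ : 0 ≤ θ) :
    ∀ᶠ x in atTop, |∫ t in x..(x+θ), g t| ≤ C * θ := by
  filter_upwards [eventually_ge_atTop (0:ℝ)] with x hx
  have := g_intBound hm hgb (a := x) (b := x + θ) hx (by linarith)
  simpa [abs_of_nonneg hθ] using this

end H

noncomputable def hh (g : ℝ → ℝ) (θ : ℝ) : ℝ :=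
  limsup (fun x => ∫ t in x..(x+θ), g t) atTop

section H2
variable {g : ℝ → ℝ} {C : ℝ}

lemma hh_le (hm : Measurable g) (hgb : ∀ x ≥ (0:ℝ), |g x| ≤ C) {θ : ℝ} (hθ : 0 ≤ θ) :
    hh g θ ≤ C * θ := by
  have hb := II_bound hm hgb hθ
  refine limsup_le_of_le ?_ (hb.mono fun x hx => (abs_le.1 hx).2)
  exact (isBoundedUnder_of_eventually_ge (hb.mono fun x hx => (abs_le.1 hx).1)).isCoboundedUnder_le

lemma le_hh (hm : Measurable g) (hgb : ∀ x ≥ (0:ℝ), |g x| ≤ C) {θ : ℝ} (hθ : 0 ≤ θ) :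
    -(C * θ) ≤ hh g θ := by
  have hb := II_bound hm hgb hθ
  refine le_limsup_of_frequently_le ((hb.mono fun x hx => (abs_le.1 hx).1).frequently) ?_
  exact isBoundedUnder_of_eventually_le (hb.mono fun x hx => (abs_le.1 hx).2)

lemma hh_subadd (hm : Measurable g) (hgb : ∀ x ≥ (0:ℝ), |g x| ≤ C)
    {a b : ℝ} (ha : 0 < a) (hb : 0 < b) : hh g (a + b) ≤ hh g a + hh g b := by
  have heq : ∀ᶠ x in atTop, (∫ t in x..(x+(a+b)), g t)
      = (∫ t in x..(x+a), g t) + (∫ t in (x+a)..((x+a)+b), g t) := by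
    filter_upwards [eventually_ge_atTop (0:ℝ)] with x hx
    have h1 : IntervalIntegrable g volume x (x+a) := g_intInt hm hgb hx (by linarith)
    have h2 : IntervalIntegrable g volume (x+a) ((x+a)+b) :=
      g_intInt hm hgb (by linarith) (by linarith)
    have := intervalIntegral.integral_add_adjacent_intervals h1 h2
    rw [show (x+a)+b = x+(a+b) by ring] at this
    rw [← this, show (x+a)+b = x+(a+b) by ring]
  have hba := II_bound hm hgb ha.le
  have hbb : ∀ᶠ x in atTop, |∫ t in (x+a)..((x+a)+b), g t| ≤ C * b := by
    have := II_bound hm hgb (θ := b) hb.le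
    filter_upwards [(tendsto_atTop_add_const_right atTop a tendsto_id).eventually this] with x hx
    exact hx
  calc hh g (a+b) = limsup (fun x => (∫ t in x..(x+a), g t)
        + (∫ t in (x+a)..((x+a)+b), g t)) atTop := limsup_congr heq
    _ ≤ limsup (fun x => ∫ t in x..(x+a), g t) atTop
        + limsup (fun x => ∫ t in (x+a)..((x+a)+b), g t) atTop := by
        refine limsup_add_le
          (isBoundedUnder_of_eventually_ge (hba.mono fun x hx => (abs_le.1 hx).1))
          (isBoundedUnder_of_eventually_le (hba.mono fun x hx => (abs_le.1 hx).2))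
          ((isBoundedUnder_of_eventually_ge
            (hbb.mono fun x hx => (abs_le.1 hx).1)).isCoboundedUnder_le)
          (isBoundedUnder_of_eventually_le (hbb.mono fun x hx => (abs_le.1 hx).2))
    _ = hh g a + hh g b := by
        congr 1
        exact aux_limsup_shift (fun y => ∫ t in y..(y+b), g t) a

lemma hh_lip (hm : Measurable g) (hgb : ∀ x ≥ (0:ℝ), |g x| ≤ C)
    {a b : ℝ} (ha : 0 < a) (hab : a ≤ b) : |hh g b - hh g a| ≤ C * (b - a) := by
  have hC : 0 ≤ C := le_trans (abs_nonneg _) (hgb 0 le_rfl)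
  have hev : ∀ᶠ x in atTop, |(∫ t in x..(x+b), g t) - (∫ t in x..(x+a), g t)| ≤ C * (b - a) := by
    filter_upwards [eventually_ge_atTop (0:ℝ)] with x hx
    have h1 : IntervalIntegrable g volume x (x+a) := g_intInt hm hgb hx (by linarith)
    have h2 : IntervalIntegrable g volume (x+a) (x+b) :=
      g_intInt hm hgb (by linarith) (by linarith)
    have h3 := intervalIntegral.integral_add_adjacent_intervals h1 h2
    have h4 := g_intBound hm hgb (a := x + a) (b := x + b) (by linarith) (by linarith)
    rw [← h3]
    simpa [abs_of_nonneg (by linarith : (0:ℝ) ≤ b - a)] using h4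
  have hba := II_bound hm hgb (le_trans ha.le hab)
  have haa := II_bound hm hgb ha.le
  refine aux_abs_limsup_sub (K := C * b) hev hba (haa.mono fun x hx => hx.trans ?_)
  exact mul_le_mul_of_nonneg_left hab hC

lemma hh_nsmul (hm : Measurable g) (hgb : ∀ x ≥ (0:ℝ), |g x| ≤ C)
    {θ : ℝ} (hθ : 0 < θ) : ∀ n : ℕ, 1 ≤ n → hh g (n * θ) ≤ n * hh g θ := by
  intro n hn
  induction n, hn using Nat.le_induction with
  | base => simp
  | succ n hn ih =>
    have : ((n:ℝ)+1) * θ = (n:ℝ) * θ + θ := by ring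
    push_cast
    rw [this]
    have hnθ : 0 < (n:ℝ) * θ := by
      have : (1:ℝ) ≤ n := by exact_mod_cast hn
      nlinarith
    calc hh g ((n:ℝ) * θ + θ) ≤ hh g ((n:ℝ)*θ) + hh g θ := hh_subadd hm hgb hnθ hθ
      _ ≤ (n:ℝ) * hh g θ + hh g θ := by have := ih; push_cast at this; linarith
      _ = ((n:ℝ)+1) * hh g θ := by ring

end H2

lemma hh_fekete {g : ℝ → ℝ} {C : ℝ} (hm : Measurable g) (hgb : ∀ x ≥ (0:ℝ), |g x| ≤ C) :
    ∃ L : ℝ, Tendsto (fun θ => hh g θ / θ) (𝓝[>] (0:ℝ)) (𝓝 L) := by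
  have hC : 0 ≤ C := le_trans (abs_nonneg _) (hgb 0 le_rfl)
  set S : Set ℝ := (fun θ => hh g θ / θ) '' Ioi 0 with hS
  have hne : S.Nonempty := ⟨hh g 1 / 1, 1, by norm_num, rfl⟩
  have hbdd : BddAbove S := by
    refine ⟨C, ?_⟩
    rintro y ⟨θ, hθ, rfl⟩
    have hθ' : (0:ℝ) < θ := hθ
    exact (div_le_iff₀ hθ').2 (hh_le hm hgb hθ'.le)
  set L := sSup S with hL
  have hub : ∀ θ : ℝ, 0 < θ → hh g θ / θ ≤ L := fun θ hθ =>
    le_csSup hbdd ⟨θ, hθ, rfl⟩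
  refine ⟨L, ?_⟩
  rw [Metric.tendsto_nhdsWithin_nhds]
  intro ε hε
  obtain ⟨y, hyS, hy⟩ := exists_lt_of_lt_csSup hne (show L - ε/2 < L by linarith)
  obtain ⟨θ₀, hθ₀, rfl⟩ := hyS
  have hθ₀' : (0:ℝ) < θ₀ := hθ₀
  set K0 : ℝ := (C*θ₀ + |hh g θ₀|)/θ₀^2 with hK0def
  have hK0 : 0 ≤ K0 := by positivity
  refine ⟨min θ₀ ((ε/4)/(K0+1)), by positivity, ?_⟩
  intro θ hθmem hdist
  have hθ : (0:ℝ) < θ := hθmem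
  rw [Real.dist_eq, sub_zero, abs_of_pos hθ] at hdist
  have hθθ₀ : θ < θ₀ := lt_of_lt_of_le hdist (min_le_left _ _)
  have hθε : θ < (ε/4)/(K0+1) := lt_of_lt_of_le hdist (min_le_right _ _)
  set n : ℕ := ⌈θ₀/θ⌉₊ with hn
  have hn1 : 1 ≤ n := Nat.one_le_ceil_iff.2 (by positivity)
  set N : ℝ := (n : ℝ) with hNdef
  have hN1 : (1:ℝ) ≤ N := by rw [hNdef]; exact_mod_cast hn1
  have hNpos : 0 < N := by linarith
  have hNθ : θ₀ ≤ N * θ := by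
    have h := Nat.le_ceil (θ₀/θ)
    rw [div_le_iff₀ hθ] at h
    exact h.trans_eq (by rw [hNdef])
  have hNθ' : N * θ ≤ θ₀ + θ := by
    have h := Nat.ceil_lt_add_one (le_of_lt (show (0:ℝ) < θ₀/θ by positivity))
    have h2 : N < θ₀/θ + 1 := by rw [hNdef]; exact_mod_cast h
    have h3 := mul_lt_mul_of_pos_right h2 hθ
    rw [add_mul, div_mul_cancel₀ _ hθ.ne'] at h3
    linarith
  have hhmul : hh g (N * θ) ≤ N * hh g θ := by
    have := hh_nsmul hm hgb hθ n hn1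
    exact_mod_cast this
  have hlip := hh_lip hm hgb hθ₀' hNθ
  have key1 : hh g θ₀ - C*θ ≤ N * hh g θ := by
    have h1 := (abs_le.1 hlip).1
    have h2 : C * (N*θ - θ₀) ≤ C * θ := mul_le_mul_of_nonneg_left (by linarith) hC
    linarith
  have hNθpos : 0 < N * θ := by positivity
  have step1 : (hh g θ₀ - C*θ)/(N*θ) ≤ hh g θ / θ := by
    have h1 : (hh g θ₀ - C*θ)/(N*θ) ≤ (N * hh g θ)/(N*θ) := by
      gcongr
    rwa [mul_div_mul_left _ _ hNpos.ne'] at h1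
  have step2 : hh g θ₀/θ₀ - (hh g θ₀ - C*θ)/(N*θ) ≤ θ * K0 := by
    rw [div_sub_div _ _ hθ₀'.ne' hNθpos.ne']
    have hnum : hh g θ₀ * (N*θ) - θ₀ * (hh g θ₀ - C*θ) ≤ |hh g θ₀| * θ + C*θ*θ₀ := by
      have e1 : hh g θ₀ * (N*θ) - θ₀ * (hh g θ₀ - C*θ)
          = hh g θ₀ * (N*θ - θ₀) + C*θ*θ₀ := by ring
      rw [e1]
      have h3 : hh g θ₀ * (N*θ - θ₀) ≤ |hh g θ₀| * (N*θ - θ₀) :=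
        mul_le_mul_of_nonneg_right (le_abs_self _) (by linarith)
      have h4 : |hh g θ₀| * (N*θ - θ₀) ≤ |hh g θ₀| * θ :=
        mul_le_mul_of_nonneg_left (by linarith) (abs_nonneg _)
      linarith
    have hden : θ₀ * θ₀ ≤ θ₀ * (N*θ) := mul_le_mul_of_nonneg_left hNθ hθ₀'.le
    have hdd := div_le_div₀ (by positivity) hnum (by positivity : (0:ℝ) < θ₀ * θ₀) hden
    refine hdd.trans (le_of_eq ?_)
    rw [hK0def]
    field_simp
    ring
  have hK0small : θ * K0 < ε/4 := by
    have h1 : θ * K0 ≤ θ * (K0 + 1) := by nlinarith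
    have h2 : θ * (K0+1) < ((ε/4)/(K0+1)) * (K0+1) :=
      mul_lt_mul_of_pos_right hθε (by linarith)
    have h3 : ((ε/4)/(K0+1)) * (K0+1) = ε/4 := by field_simp
    linarith
  have hlow : L - ε/2 - ε/4 < hh g θ / θ := by
    have := step1
    have := step2
    linarith
  have hup : hh g θ / θ ≤ L := hub θ hθ
  rw [Real.dist_eq, abs_lt]
  constructor <;> linarith


lemma innerK_eq_hh_div {g : ℝ → ℝ} {C : ℝ} (hm : Measurable g)
    (hgb : ∀ x ≥ (0:ℝ), |g x| ≤ C) {θ : ℝ} (hθ : 0 < θ) :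
    innerK g θ = hh g θ / θ := by
  have hb := II_bound hm hgb hθ.le
  have hb2 : ∀ᶠ x in atTop, |(∫ t in x..(x+θ), g t) * θ⁻¹| ≤ C * θ * θ⁻¹ := by
    filter_upwards [hb] with x hx
    rw [abs_mul, abs_of_pos (inv_pos.2 hθ)]
    exact mul_le_mul_of_nonneg_right hx (inv_pos.2 hθ).le
  set e : ℝ ≃o ℝ := OrderIso.mulRight₀ θ⁻¹ (inv_pos.2 hθ) with he
  have happ := e.limsup_apply (u := fun x => ∫ t in x..(x+θ), g t) (f := atTop)
    (isBoundedUnder_of_eventually_le (hb.mono fun x hx => (abs_le.1 hx).2))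
    ((isBoundedUnder_of_eventually_ge (hb.mono fun x hx => (abs_le.1 hx).1)).isCoboundedUnder_le)
    (isBoundedUnder_of_eventually_le (hb2.mono fun x hx => (abs_le.1 hx).2))
    ((isBoundedUnder_of_eventually_ge (hb2.mono fun x hx => (abs_le.1 hx).1)).isCoboundedUnder_le)
  have he1 : ∀ y : ℝ, e y = y * θ⁻¹ := fun y => rfl
  rw [innerK, hh]
  calc limsup (fun x : ℝ => (∫ t in x..(x+θ), g t) / θ) atTop
      = limsup (fun x : ℝ => e (∫ t in x..(x+θ), g t)) atTop := by
        apply limsup_congr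
        exact Eventually.of_forall fun x => by rw [he1, div_eq_mul_inv]
    _ = e (limsup (fun x : ℝ => ∫ t in x..(x+θ), g t) atTop) := happ.symm
    _ = _ := by rw [he1, div_eq_mul_inv]

lemma innerP_compare {f : ℝ → ℝ} {C : ℝ} (hm : Measurable f)
    (hb : ∀ x ≥ (1:ℝ), |f x| ≤ C) {θ : ℝ} (hθ : 1 < θ) :
    |innerP f θ - innerK (fun y => f (Real.exp y)) (Real.log θ)| ≤ C * Real.log θ := by
  set g : ℝ → ℝ := fun y => f (Real.exp y) with hg
  have hgm : Measurable g := hm.comp Real.measurable_exp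
  have hgb : ∀ y ≥ (0:ℝ), |g y| ≤ C := fun y hy => hb _ (Real.one_le_exp hy)
  have hC : 0 ≤ C := le_trans (abs_nonneg _) (hgb 0 le_rfl)
  set τ : ℝ := Real.log θ with hτdef
  have hτ : 0 < τ := Real.log_pos hθ
  have hθ0 : 0 < θ := by linarith
  set u : ℝ → ℝ := fun x => (∫ t in x..(θ*x), f t)/(θ*x - x) with hu
  set v : ℝ → ℝ := fun y => (∫ t in y..(y+τ), g t)/τ with hv
  have key : ∀ y : ℝ, 0 ≤ y → |u (Real.exp y) - v y| ≤ C * τ := by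
    intro y hy
    set x : ℝ := Real.exp y with hxdef
    have hx1 : 1 ≤ x := Real.one_le_exp hy
    have hx0 : 0 < x := by linarith
    have hxθ : Real.exp (y + τ) = θ * x := by
      rw [Real.exp_add, Real.exp_log hθ0]; ring
    have hle : x ≤ θ * x := by nlinarith
    have himg : Real.exp '' (Ioc y (y+τ)) = Ioc x (θ*x) := by
      ext t
      constructor
      · rintro ⟨s, ⟨hs1, hs2⟩, rfl⟩
        exact ⟨Real.exp_lt_exp.2 hs1, hxθ ▸ Real.exp_le_exp.2 hs2⟩
      · rintro ⟨ht1, ht2⟩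
        have ht0 : 0 < t := lt_trans hx0 ht1
        refine ⟨Real.log t, ⟨?_, ?_⟩, Real.exp_log ht0⟩
        · exact (Real.lt_log_iff_exp_lt ht0).2 ht1
        · exact (Real.log_le_iff_le_exp ht0).2 (hxθ ▸ ht2)
    have hsub : (∫ t in x..(θ*x), f t) = ∫ s in y..(y+τ), Real.exp s * g s := by
      rw [intervalIntegral.integral_of_le hle,
        intervalIntegral.integral_of_le (by linarith : y ≤ y+τ), ← himg,
        MeasureTheory.integral_image_eq_integral_abs_deriv_smul measurableSet_Ioc
          (fun s _ => (Real.hasDerivAt_exp s).hasDerivWithinAt) Real.exp_injective.injOn f]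
      refine setIntegral_congr_fun measurableSet_Ioc fun s _ => ?_
      simp [abs_of_pos (Real.exp_pos s), smul_eq_mul, hg]
    have hint1 : IntervalIntegrable (fun s => Real.exp s * g s) volume y (y+τ) := by
      refine aux_intInt (Real.measurable_exp.mul hgm) (C := θ*x*C) fun t ht => ?_
      rw [uIoc_of_le (by linarith : y ≤ y + τ)] at ht
      rcases ht with ⟨ht1, ht2⟩
      rw [Pi.mul_apply, abs_mul, abs_of_pos (Real.exp_pos t)]
      have h1 : Real.exp t ≤ θ * x := by rw [← hxθ]; exact Real.exp_le_exp.2 ht2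
      have h2 : |g t| ≤ C := hgb t (le_of_lt (lt_of_le_of_lt hy ht1))
      have h3 : 0 < Real.exp t := Real.exp_pos t
      nlinarith
    have hint2 : IntervalIntegrable g volume y (y+τ) := g_intInt hgm hgb hy (by linarith)
    have hD : u x - v y = ∫ s in y..(y+τ), (Real.exp s/(θ*x - x) - 1/τ) * g s := by
      have e1 : u x = ∫ s in y..(y+τ), (Real.exp s * g s)/(θ*x - x) := by
        rw [hu]; simp only []; rw [hsub, intervalIntegral.integral_div]
      have e2 : v y = ∫ s in y..(y+τ), g s / τ := by
        rw [hv]; simp only []; rw [intervalIntegral.integral_div]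
      rw [e1, e2, ← intervalIntegral.integral_sub (hint1.div_const _) (hint2.div_const _)]
      refine intervalIntegral.integral_congr fun s _ => ?_
      ring
    rw [hD]
    have hbnd : ∀ s ∈ Set.uIoc y (y+τ), ‖(Real.exp s/(θ*x - x) - 1/τ) * g s‖ ≤ C := by
      intro s hs
      rw [uIoc_of_le (by linarith : y ≤ y + τ)] at hs
      rcases hs with ⟨hs1, hs2⟩
      set d : ℝ := θ - 1 with hd
      have hd0 : 0 < d := by rw [hd]; linarith
      have hdx : θ*x - x = d*x := by rw [hd]; ring
      have hdxpos : 0 < d * x := by positivity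
      set A : ℝ := Real.exp s/(θ*x - x) with hA
      have hA1 : 1/d ≤ A := by
        rw [hA, hdx]
        have : x ≤ Real.exp s := by
          rw [hxdef]; exact Real.exp_le_exp.2 hs1.le
        calc 1/d = x/(d*x) := by field_simp
          _ ≤ Real.exp s/(d*x) := by gcongr
      have hA2 : A ≤ θ/d := by
        rw [hA, hdx]
        have : Real.exp s ≤ θ * x := by rw [← hxθ]; exact Real.exp_le_exp.2 hs2
        calc Real.exp s/(d*x) ≤ (θ*x)/(d*x) := by gcongr
          _ = θ/d := by field_simp
      have hB1 : 1/d ≤ 1/τ := by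
        have : τ ≤ d := by rw [hd, hτdef]; exact Real.log_le_sub_one_of_pos hθ0
        gcongr
      have hB2 : 1/τ ≤ θ/d := by
        have hlog : Real.log θ⁻¹ ≤ θ⁻¹ - 1 := Real.log_le_sub_one_of_pos (by positivity)
        rw [Real.log_inv] at hlog
        have hinv : θ * θ⁻¹ = 1 := mul_inv_cancel₀ hθ0.ne'
        have hdτ : d ≤ θ * τ := by
          rw [hd]
          nlinarith
        rw [div_le_div_iff₀ hτ hd0]
        linarith
      have hone : θ/d - 1/d = 1 := by
        rw [div_sub_div_same, hd]
        exact div_self hd0.ne'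
      have habs : |A - 1/τ| ≤ 1 := by
        rw [abs_le]; constructor <;> linarith
      have hgs : |g s| ≤ C := hgb s (le_of_lt (lt_of_le_of_lt hy hs1))
      rw [Real.norm_eq_abs, abs_mul]
      calc |A - 1/τ| * |g s| ≤ 1 * C := by
            exact mul_le_mul habs hgs (abs_nonneg _) zero_le_one
        _ = C := one_mul C
    have := intervalIntegral.norm_integral_le_of_norm_le_const hbnd
    rw [Real.norm_eq_abs] at this
    refine this.trans (le_of_eq ?_)
    rw [show y + τ - y = τ by ring, abs_of_pos hτ]
  -- limsup part
  have hPeq : innerP f θ = limsup (fun y => u (Real.exp y)) atTop := by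
    rw [innerP, aux_limsup_map u Real.exp atTop, Real.map_exp_atTop]
  have hvB : ∀ᶠ y in atTop, |v y| ≤ C := by
    filter_upwards [eventually_ge_atTop (0:ℝ)] with y hy
    have h1 := g_intBound hgm hgb (a := y) (b := y + τ) hy (by linarith)
    rw [hv]; simp only []
    rw [abs_div, abs_of_pos hτ, div_le_iff₀ hτ]
    rw [show y + τ - y = τ by ring, abs_of_pos hτ] at h1
    linarith [h1]
  have hev : ∀ᶠ y in atTop, |(fun y => u (Real.exp y)) y - v y| ≤ C * τ := by
    filter_upwards [eventually_ge_atTop (0:ℝ)] with y hy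
    exact key y hy
  have huB : ∀ᶠ y in atTop, |u (Real.exp y)| ≤ C + C * τ := by
    filter_upwards [hev, hvB] with y h1 h2
    have := abs_sub_abs_le_abs_sub (u (Real.exp y)) (v y)
    linarith
  have hvB' : ∀ᶠ y in atTop, |v y| ≤ C + C * τ := by
    filter_upwards [hvB] with y h1
    nlinarith
  have := aux_abs_limsup_sub (K := C + C * τ) hev huB hvB'
  rw [hPeq]
  exact this

/-- For every `f ∈ L^∞([1,∞))`, `P̄(f) = K̄(Wf)` where `(Wf)(x) = f(eˣ)`. -/
theorem Pbar_eq_Kbar_comp_exp (f : ℝ → ℝ) (C : ℝ)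
    (hm : Measurable f) (hb : ∀ x ≥ (1 : ℝ), |f x| ≤ C) :
    ∃ L : ℝ, Tendsto (innerP f) (𝓝[>] (1 : ℝ)) (𝓝 L) ∧
      Tendsto (innerK (fun x => f (Real.exp x))) (𝓝[>] (0 : ℝ)) (𝓝 L) := by
  set g : ℝ → ℝ := fun x => f (Real.exp x) with hg
  have hgm : Measurable g := hm.comp Real.measurable_exp
  have hgb : ∀ y ≥ (0:ℝ), |g y| ≤ C := fun y hy => hb _ (Real.one_le_exp hy)
  obtain ⟨L, hL⟩ := hh_fekete hgm hgb
  have hKtendsto : Tendsto (innerK g) (𝓝[>] (0:ℝ)) (𝓝 L) := by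
    refine Tendsto.congr' ?_ hL
    filter_upwards [self_mem_nhdsWithin] with θ (hθ : θ ∈ Ioi 0)
    exact (innerK_eq_hh_div hgm hgb hθ).symm
  refine ⟨L, ?_, hKtendsto⟩
  have hlog : Tendsto Real.log (𝓝[>] (1:ℝ)) (𝓝[>] (0:ℝ)) := by
    rw [tendsto_nhdsWithin_iff]
    constructor
    · have h := (Real.continuousAt_log (by norm_num : (1:ℝ) ≠ 0)).tendsto
      rw [Real.log_one] at h
      exact h.mono_left nhdsWithin_le_nhds
    · filter_upwards [self_mem_nhdsWithin] with θ (hθ : θ ∈ Ioi 1)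
      exact Real.log_pos hθ
  have h1 : Tendsto (fun θ => innerK g (Real.log θ)) (𝓝[>] (1:ℝ)) (𝓝 L) :=
    hKtendsto.comp hlog
  have h2 : Tendsto (fun θ => innerP f θ - innerK g (Real.log θ)) (𝓝[>] (1:ℝ)) (𝓝 0) := by
    refine squeeze_zero_norm' (a := fun θ => C * Real.log θ) ?_ ?_
    · filter_upwards [self_mem_nhdsWithin] with θ (hθ : θ ∈ Ioi 1)
      rw [Real.norm_eq_abs]
      exact innerP_compare hm hb hθ
    · have h := (tendsto_const_nhds (x := C)).mul (hlog.mono_right nhdsWithin_le_nhds)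
      simpa using h
  have h3 := h1.add h2
  rw [add_zero] at h3
  refine h3.congr fun θ => by ring
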